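/- Let (q_n) be a sequence in (0, 1/2] with Σ_n d·q_n = 1 for a positive integer d, and let λ be a complex number of modulus 1 with λ ≠ 1. Then |Σ_{n=1}^∞ d·q_n² /(λ - 1 + q_n)| < 1. -/

import Mathlib

/-- If `q_n ∈ (0,1/2]` with `Σ_n d·q_n = 1` for a positive integer `d`, and `λ` is a
unimodular complex number with `λ ≠ 1`, then `|Σ_n d·q_n²/(λ - 1 + q_n)| < 1`. -/
theorem abs_tsum_resolvent_pairing_lt_one (q : ℕ → ℝ)
    (hq : ∀ n, q n ∈ Set.Ioc (0 : ℝ) (1 / 2)) (d : ℕ) (hd : 0 < d)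
    (htot : ∑' n : ℕ, (d : ℝ) * q n = 1)
    (lam : ℂ) (hlam : ‖lam‖ = 1) (hne : lam ≠ 1) :
    ‖∑' n : ℕ, (d : ℂ) * (q n : ℂ) ^ 2 / (lam - 1 + (q n : ℂ))‖ < 1 := by
  have hre : lam.re < 1 := by
    have h1 : lam.re ≤ 1 := hlam ▸ Complex.re_le_norm lam
    rcases lt_or_eq_of_le h1 with h | h
    · exact h
    · exfalso
      have hsq : ‖lam‖ ^ 2 = lam.re ^ 2 + lam.im ^ 2 := by
        rw [Complex.sq_norm, Complex.normSq_apply]; ring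
      rw [show ‖lam‖ = 1 from hlam, ← h] at hsq
      have him : lam.im = 0 := by nlinarith
      exact hne (Complex.ext (by simpa using h) (by simpa using him))
  have hnormsq : ‖lam‖ ^ 2 = lam.re ^ 2 + lam.im ^ 2 := by
    rw [Complex.sq_norm, Complex.normSq_apply]; ring
  rw [show ‖lam‖ = 1 from hlam] at hnormsq
  have hden : ∀ n, q n < ‖lam - 1 + (q n : ℂ)‖ := by
    intro n
    obtain ⟨h0, h2⟩ := hq n
    refine lt_of_pow_lt_pow_left₀ 2 (norm_nonneg _) ?_
    have : ‖lam - 1 + (q n : ℂ)‖ ^ 2 = (lam.re - 1 + q n) ^ 2 + lam.im ^ 2 := by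
      rw [Complex.sq_norm, Complex.normSq_apply]
      simp
      ring
    rw [this]
    nlinarith [sq_nonneg lam.im]
  have hdpos : (0 : ℝ) < d := Nat.cast_pos.mpr hd
  have hnorm : ∀ n, ‖(d : ℂ) * (q n : ℂ) ^ 2 / (lam - 1 + (q n : ℂ))‖
      = (d : ℝ) * q n ^ 2 / ‖lam - 1 + (q n : ℂ)‖ := by
    intro n
    rw [norm_div, norm_mul, norm_pow]
    simp [abs_of_pos (hq n).1]
  have hlt : ∀ n, ‖(d : ℂ) * (q n : ℂ) ^ 2 / (lam - 1 + (q n : ℂ))‖ < (d : ℝ) * q n := by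
    intro n
    obtain ⟨h0, _⟩ := hq n
    rw [hnorm n]
    rw [div_lt_iff₀ (lt_trans h0 (hden n))]
    nlinarith [mul_pos (mul_pos hdpos h0) (sub_pos.mpr (hden n))]
  have hg : Summable (fun n => (d : ℝ) * q n) := by
    by_contra h
    rw [tsum_eq_zero_of_not_summable h] at htot
    norm_num at htot
  have hfs : Summable (fun n => ‖(d : ℂ) * (q n : ℂ) ^ 2 / (lam - 1 + (q n : ℂ))‖) :=
    Summable.of_nonneg_of_le (fun n => norm_nonneg _) (fun n => (hlt n).le) hg
  calc ‖∑' n : ℕ, (d : ℂ) * (q n : ℂ) ^ 2 / (lam - 1 + (q n : ℂ))‖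
      ≤ ∑' n : ℕ, ‖(d : ℂ) * (q n : ℂ) ^ 2 / (lam - 1 + (q n : ℂ))‖ :=
        norm_tsum_le_tsum_norm hfs
    _ < ∑' n : ℕ, (d : ℝ) * q n := Summable.tsum_lt_tsum (fun n => (hlt n).le) (hlt 0) hfs hg
    _ = 1 := htot
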